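/- arXiv:2007.08133 — 2 statements merged into one kernel-verified Lean document; each statement's English description precedes it below -/
import Mathlib

section
/- Let v, ṽ ∈ ℝ^d have all entries in (0,1] and Euclidean norm 1. Define w = v^{3/2}/(Σ_i v_i^{3/2}) and w̃ = ṽ^{3/2}/(Σ_i ṽ_i^{3/2}) (entrywise powers). Then ‖w̃ - w‖₂ ≤ (3/2)(1 + √d)·‖ṽ - v‖₂. -/
lemma pow32_eq (x : ℝ) (hx : 0 ≤ x) : x ^ ((3:ℝ)/2) = Real.sqrt x ^ 3 := by
  rw [show ((3:ℝ)/2) = (1/2) * 3 by ring, Real.rpow_mul hx, ← Real.sqrt_eq_rpow,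
    ← Real.rpow_natCast (Real.sqrt x) 3]
  norm_num

lemma pow32_sub_le {x y : ℝ} (hy : 0 ≤ y) (hxy : y ≤ x) (hx1 : x ≤ 1) :
    x ^ ((3:ℝ)/2) - y ^ ((3:ℝ)/2) ≤ 3/2 * (x - y) := by
  have hx0 : 0 ≤ x := hy.trans hxy
  rw [pow32_eq x hx0, pow32_eq y hy]
  set s := Real.sqrt x with hs
  set t := Real.sqrt y with ht'
  have ht : 0 ≤ t := Real.sqrt_nonneg _
  have hts : t ≤ s := Real.sqrt_le_sqrt hxy
  have hs1 : s ≤ 1 := Real.sqrt_le_one.2 hx1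
  have hsx : s ^ 2 = x := Real.sq_sqrt hx0
  have hty : t ^ 2 = y := Real.sq_sqrt hy
  rw [← hsx, ← hty]
  nlinarith [mul_nonneg (sub_nonneg.2 hts) (mul_nonneg (sub_nonneg.2 hs1) ht),
    mul_nonneg (sub_nonneg.2 hts) (mul_nonneg (sub_nonneg.2 (hts.trans hs1)) (ht.trans hts)),
    sq_nonneg (s - t)]

lemma pow32_abs_sub_le {x y : ℝ} (hy : 0 ≤ y) (hx : 0 ≤ x) (hx1 : x ≤ 1) (hy1 : y ≤ 1) :
    |x ^ ((3:ℝ)/2) - y ^ ((3:ℝ)/2)| ≤ 3/2 * |x - y| := by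
  rcases le_total y x with h | h
  · rw [abs_of_nonneg (sub_nonneg.2 (Real.rpow_le_rpow hy h (by norm_num))), abs_of_nonneg (by linarith)]
    exact pow32_sub_le hy h hx1
  · rw [abs_sub_comm, abs_sub_comm x y, abs_of_nonneg (sub_nonneg.2 (Real.rpow_le_rpow hx h (by norm_num))), abs_of_nonneg (by linarith)]
    exact pow32_sub_le hx h hy1

theorem stmt_4 (d : ℕ) (v w : Fin d → ℝ)
    (hv : ∀ i, 0 < v i ∧ v i ≤ 1) (hw : ∀ i, 0 < w i ∧ w i ≤ 1)
    (hvn : Real.sqrt (∑ i, (v i) ^ 2) = 1) (hwn : Real.sqrt (∑ i, (w i) ^ 2) = 1) :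
    Real.sqrt (∑ i, ((w i) ^ ((3 : ℝ) / 2) / (∑ j, (w j) ^ ((3 : ℝ) / 2))
        - (v i) ^ ((3 : ℝ) / 2) / (∑ j, (v j) ^ ((3 : ℝ) / 2))) ^ 2)
      ≤ (3 / 2) * (1 + Real.sqrt d) * Real.sqrt (∑ i, (w i - v i) ^ 2) := by
  -- sums of squares equal 1
  have hv2 : (∑ i, (v i) ^ 2) = 1 := by
    have h0 : 0 ≤ ∑ i, (v i) ^ 2 := Finset.sum_nonneg fun i _ => sq_nonneg _
    nlinarith [Real.sq_sqrt h0]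
  have hw2 : (∑ i, (w i) ^ 2) = 1 := by
    have h0 : 0 ≤ ∑ i, (w i) ^ 2 := Finset.sum_nonneg fun i _ => sq_nonneg _
    nlinarith [Real.sq_sqrt h0]
  set a : Fin d → ℝ := fun i => (v i) ^ ((3:ℝ)/2) with ha
  set b : Fin d → ℝ := fun i => (w i) ^ ((3:ℝ)/2) with hb
  set S : ℝ := ∑ j, a j with hS
  set T : ℝ := ∑ j, b j with hT
  have ha_nonneg : ∀ i, 0 ≤ a i := fun i => Real.rpow_nonneg (hv i).1.le _
  have hb_nonneg : ∀ i, 0 ≤ b i := fun i => Real.rpow_nonneg (hw i).1.le _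
  have hv2a : ∀ i, (v i) ^ 2 ≤ a i := by
    intro i
    have := Real.rpow_le_rpow_of_exponent_ge (hv i).1 (hv i).2 (show (3:ℝ)/2 ≤ 2 by norm_num)
    calc (v i)^2 = (v i) ^ (2:ℝ) := by rw [← Real.rpow_natCast (v i) 2]; norm_num
    _ ≤ a i := this
  have hw2b : ∀ i, (w i) ^ 2 ≤ b i := by
    intro i
    have := Real.rpow_le_rpow_of_exponent_ge (hw i).1 (hw i).2 (show (3:ℝ)/2 ≤ 2 by norm_num)
    calc (w i)^2 = (w i) ^ (2:ℝ) := by rw [← Real.rpow_natCast (w i) 2]; norm_num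
    _ ≤ b i := this
  have ha_le_v : ∀ i, a i ≤ v i := by
    intro i
    have := Real.rpow_le_rpow_of_exponent_ge (hv i).1 (hv i).2 (show (1:ℝ) ≤ 3/2 by norm_num)
    simpa [Real.rpow_one] using this
  have hS1 : 1 ≤ S := by
    rw [hS, ← hv2]; exact Finset.sum_le_sum fun i _ => hv2a i
  have hT1 : 1 ≤ T := by
    rw [hT, ← hw2]; exact Finset.sum_le_sum fun i _ => hw2b i
  have hS0 : (0:ℝ) < S := lt_of_lt_of_le one_pos hS1
  have hT0 : (0:ℝ) < T := lt_of_lt_of_le one_pos hT1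
  have hna2 : (∑ i, (a i) ^ 2) ≤ 1 := by
    rw [← hv2]
    exact Finset.sum_le_sum fun i _ => by
      have := ha_le_v i
      nlinarith [ha_nonneg i]
  -- pointwise bound
  have hab : ∀ i, |b i - a i| ≤ 3/2 * |w i - v i| :=
    fun i => pow32_abs_sub_le (hv i).1.le (hw i).1.le (hw i).2 (hv i).2
  set N : ℝ := Real.sqrt (∑ i, (w i - v i) ^ 2) with hN
  have hN0 : 0 ≤ N := Real.sqrt_nonneg _
  -- vectors in EuclideanSpace
  set y : EuclideanSpace ℝ (Fin d) := WithLp.toLp 2 (fun i => (b i - a i) / T) with hy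
  set aE : EuclideanSpace ℝ (Fin d) := WithLp.toLp 2 (fun i => a i) with haE
  set z : EuclideanSpace ℝ (Fin d) := ((S - T)/(S*T)) • aE with hz
  have hSne : S ≠ 0 := hS0.ne'
  have hTne : T ≠ 0 := hT0.ne'
  have hdecomp : ∀ i, b i / T - a i / S = y i + z i := by
    intro i
    have hyi : y i = (b i - a i) / T := rfl
    have hzi : z i = (S - T)/(S*T) * a i := rfl
    rw [hyi, hzi]
    field_simp
    ring
  have hLHS : Real.sqrt (∑ i, (b i / T - a i / S) ^ 2) = ‖y + z‖ := by
    rw [EuclideanSpace.norm_eq]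
    congr 1
    refine Finset.sum_congr rfl fun i _ => ?_
    rw [hdecomp i]
    simp [Real.norm_eq_abs, sq_abs, PiLp.add_apply]
  -- bound on ‖y‖
  have hy_bound : ‖y‖ ≤ 3/2 * N := by
    rw [EuclideanSpace.norm_eq]
    have h1 : (∑ i, ‖y i‖ ^ 2) ≤ ∑ i, (3/2 * |w i - v i|)^2 := by
      refine Finset.sum_le_sum fun i _ => ?_
      have h2 : |y i| ≤ 3/2 * |w i - v i| := by
        show |(b i - a i)/T| ≤ _
        rw [abs_div, abs_of_pos hT0]
        calc |b i - a i| / T ≤ |b i - a i| := div_le_self (abs_nonneg _) hT1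
        _ ≤ _ := hab i
      calc ‖y i‖ ^ 2 = |y i|^2 := by rw [Real.norm_eq_abs]
      _ ≤ (3/2 * |w i - v i|)^2 := by
          apply sq_le_sq' _ h2
          nlinarith [abs_nonneg (y i), abs_nonneg (w i - v i)]
    calc Real.sqrt (∑ i, ‖y i‖ ^ 2) ≤ Real.sqrt (∑ i, (3/2 * |w i - v i|)^2) :=
          Real.sqrt_le_sqrt h1
    _ = 3/2 * N := by
        rw [hN]
        rw [show (∑ i, (3/2 * |w i - v i|)^2) = (3/2)^2 * ∑ i, (w i - v i)^2 by
          rw [Finset.mul_sum]; exact Finset.sum_congr rfl fun i _ => by rw [mul_pow, sq_abs]]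
        rw [Real.sqrt_mul (by norm_num), Real.sqrt_sq (by norm_num)]
  -- bound on ‖z‖
  have haE_norm : ‖aE‖ ≤ 1 := by
    rw [EuclideanSpace.norm_eq]
    calc Real.sqrt (∑ i, ‖aE i‖^2) = Real.sqrt (∑ i, (a i)^2) := by
          congr 1; exact Finset.sum_congr rfl fun i _ => by rw [Real.norm_eq_abs, sq_abs]
    _ ≤ Real.sqrt 1 := Real.sqrt_le_sqrt hna2
    _ = 1 := Real.sqrt_one
  have hST_bound : |S - T| ≤ 3/2 * Real.sqrt d * N := by
    have h1 : |S - T| ≤ ∑ i, |b i - a i| := by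
      calc |S - T| = |∑ i, (a i - b i)| := by rw [hS, hT, ← Finset.sum_sub_distrib]
      _ ≤ ∑ i, |a i - b i| := Finset.abs_sum_le_sum_abs _ _
      _ = ∑ i, |b i - a i| := Finset.sum_congr rfl fun i _ => abs_sub_comm _ _
    have h2 : (∑ i, |b i - a i|) ≤ 3/2 * ∑ i, |w i - v i| := by
      rw [Finset.mul_sum]; exact Finset.sum_le_sum fun i _ => hab i
    have h3 : (∑ i, |w i - v i|) ≤ Real.sqrt d * N := by
      have hcs : (∑ i, |w i - v i|)^2 ≤ (d:ℝ) * ∑ i, |w i - v i|^2 := by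
        have := sq_sum_le_card_mul_sum_sq (s := Finset.univ) (f := fun i => |w i - v i|)
        simpa using this
      have h4 : (∑ i, |w i - v i|) = Real.sqrt ((∑ i, |w i - v i|)^2) := by
        rw [Real.sqrt_sq (Finset.sum_nonneg fun i _ => abs_nonneg _)]
      rw [h4]
      calc Real.sqrt ((∑ i, |w i - v i|)^2) ≤ Real.sqrt ((d:ℝ) * ∑ i, |w i - v i|^2) :=
            Real.sqrt_le_sqrt hcs
      _ = Real.sqrt d * N := by
          rw [Real.sqrt_mul (Nat.cast_nonneg d), hN]
          congr 2
          exact Finset.sum_congr rfl fun i _ => by rw [sq_abs]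
    calc |S - T| ≤ 3/2 * ∑ i, |w i - v i| := h1.trans h2
    _ ≤ 3/2 * (Real.sqrt d * N) := by linarith
    _ = 3/2 * Real.sqrt d * N := by ring
  have hz_bound : ‖z‖ ≤ 3/2 * Real.sqrt d * N := by
    rw [hz, norm_smul, Real.norm_eq_abs]
    have hST1 : 1 ≤ S * T := one_le_mul_of_one_le_of_one_le hS1 hT1
    have h1 : |(S - T)/(S*T)| ≤ |S - T| := by
      rw [abs_div, abs_of_pos (mul_pos hS0 hT0)]
      exact div_le_self (abs_nonneg _) hST1
    calc |(S - T)/(S*T)| * ‖aE‖ ≤ |S - T| * 1 :=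
          mul_le_mul h1 haE_norm (norm_nonneg _) (abs_nonneg _)
    _ = |S - T| := by ring
    _ ≤ _ := hST_bound
  calc Real.sqrt (∑ i, (b i / T - a i / S) ^ 2) = ‖y + z‖ := hLHS
  _ ≤ ‖y‖ + ‖z‖ := norm_add_le _ _
  _ ≤ 3/2 * N + 3/2 * Real.sqrt d * N := add_le_add hy_bound hz_bound
  _ = (3/2) * (1 + Real.sqrt d) * N := by ring
end

section
/- Let A = [a_1,…,a_r] ∈ ℝ^{d×r} have σ_r(A) > 0 and let x ∈ ℝ^d. Define the matrix A^{⊙2} ∈ ℝ^{d²×r} whose i-th column is vec(a_i a_iᵀ). Then σ_r(A^{⊙2}) ≥ σ_r(A)² > 0; in particular A^{⊙2} has full column rank, so for any b ∈ ℝ^{d²} the least squares problem min_{ξ∈ℝ^r} ‖A^{⊙2} ξ - b‖₂ has a unique solution. -/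
open Matrix

noncomputable def sval {m n : Type*} [Fintype m] [Fintype n] (A : Matrix m n ℝ) (i : ℕ) : ℝ :=
  sSup {c : ℝ | 0 ≤ c ∧ ∃ V : Submodule ℝ (EuclideanSpace ℝ n),
    i ≤ Module.finrank ℝ V ∧
    ∀ x : EuclideanSpace ℝ n, x ∈ V →
      c * ‖x‖ ≤ ‖(EuclideanSpace.equiv m ℝ).symm (A.mulVec ((EuclideanSpace.equiv n ℝ) x))‖}

lemma enorm_eq {n : Type*} [Fintype n] (x : EuclideanSpace ℝ n) :
    ‖x‖ = Real.sqrt (∑ i, x i ^ 2) := by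
  rw [EuclideanSpace.norm_eq]; simp [sq_abs]

-- squared characterization of the norm inequality
lemma sq_char {c : ℝ} (hc : 0 ≤ c) {n m : Type*} [Fintype n] [Fintype m]
    (x : n → ℝ) (v : m → ℝ) :
    c * Real.sqrt (∑ i, x i ^ 2) ≤ Real.sqrt (∑ p, v p ^ 2) ↔
      c ^ 2 * ∑ i, x i ^ 2 ≤ ∑ p, v p ^ 2 := by
  have hs : (0:ℝ) ≤ ∑ i, x i ^ 2 := Finset.sum_nonneg fun i _ => sq_nonneg _
  have hv : (0:ℝ) ≤ ∑ p, v p ^ 2 := Finset.sum_nonneg fun i _ => sq_nonneg _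
  rw [show c * Real.sqrt (∑ i, x i ^ 2) = Real.sqrt (c ^ 2 * ∑ i, x i ^ 2) by
      rw [Real.sqrt_mul (sq_nonneg c), Real.sqrt_sq hc]]
  exact Real.sqrt_le_sqrt_iff hv


lemma norm_symm_eq {m : Type*} [Fintype m] (v : m → ℝ) :
    ‖(EuclideanSpace.equiv m ℝ).symm v‖ = Real.sqrt (∑ p, v p ^ 2) := enorm_eq _

lemma mem_sval_set_iff {m : Type*} [Fintype m] (r : ℕ) (M : Matrix m (Fin r) ℝ) (c : ℝ) :
    (c ∈ {c : ℝ | 0 ≤ c ∧ ∃ V : Submodule ℝ (EuclideanSpace ℝ (Fin r)),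
      r ≤ Module.finrank ℝ V ∧
      ∀ x : EuclideanSpace ℝ (Fin r), x ∈ V →
        c * ‖x‖ ≤ ‖(EuclideanSpace.equiv m ℝ).symm (M.mulVec ((EuclideanSpace.equiv (Fin r) ℝ) x))‖}) ↔
    (0 ≤ c ∧ ∀ x : Fin r → ℝ, c ^ 2 * ∑ i, x i ^ 2 ≤ ∑ p, (M.mulVec x p) ^ 2) := by
  constructor
  · rintro ⟨hc, V, hV, h⟩
    refine ⟨hc, fun x => ?_⟩
    have hVtop : V = ⊤ := by
      apply Submodule.eq_top_of_finrank_eq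
      have h1 := Submodule.finrank_le V
      have h2 : Module.finrank ℝ (EuclideanSpace ℝ (Fin r)) = r := finrank_euclideanSpace_fin
      omega
    have := h (WithLp.toLp 2 x) (hVtop ▸ Submodule.mem_top)
    rw [norm_symm_eq, enorm_eq] at this
    exact (sq_char hc _ _).mp this
  · rintro ⟨hc, h⟩
    refine ⟨hc, ⊤, ?_, fun x _ => ?_⟩
    · rw [finrank_top, finrank_euclideanSpace_fin]
    · rw [norm_symm_eq, enorm_eq]
      exact (sq_char hc _ _).mpr (h x)

lemma key_quad {d r : ℕ} (A : Matrix (Fin d) (Fin r) ℝ) (lam : ℝ)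
    (h : ∀ y : Fin r → ℝ, lam ^ 2 * ∑ i, y i ^ 2 ≤ ∑ p, (A.mulVec y p) ^ 2) (x : Fin r → ℝ) :
    (lam ^ 2) ^ 2 * ∑ i, x i ^ 2 ≤
      ∑ p : Fin d × Fin d,
        ((Matrix.of fun (p : Fin d × Fin d) i => A p.1 i * A p.2 i).mulVec x p) ^ 2 := by
  have hl : (0:ℝ) ≤ lam ^ 2 := sq_nonneg _
  have hrw : ∑ p : Fin d × Fin d,
        ((Matrix.of fun (p : Fin d × Fin d) i => A p.1 i * A p.2 i).mulVec x p) ^ 2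
      = ∑ p2 : Fin d, ∑ p1 : Fin d, (A.mulVec (fun i => A p2 i * x i) p1) ^ 2 := by
    rw [Fintype.sum_prod_type, Finset.sum_comm]
    simp [Matrix.mulVec, dotProduct, mul_assoc]
  have h2 : ∀ i : Fin r, lam ^ 2 ≤ ∑ p2 : Fin d, (A p2 i) ^ 2 := by
    intro i
    have := h (Pi.single i 1)
    simpa [Matrix.mulVec_single, Pi.single_apply, Finset.sum_ite_eq'] using this
  calc (lam ^ 2) ^ 2 * ∑ i, x i ^ 2 = lam ^ 2 * ∑ i, lam ^ 2 * x i ^ 2 := by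
        rw [Finset.mul_sum, Finset.mul_sum, ← Finset.sum_attach]
        rw [← Finset.sum_attach (f := fun i => lam ^ 2 * (lam ^ 2 * x i ^ 2))]
        exact Finset.sum_congr rfl fun i _ => by ring
    _ ≤ lam ^ 2 * ∑ i, (∑ p2, (A p2 i) ^ 2) * x i ^ 2 := by
        refine mul_le_mul_of_nonneg_left (Finset.sum_le_sum fun i _ => ?_) hl
        exact mul_le_mul_of_nonneg_right (h2 i) (sq_nonneg _)
    _ = ∑ p2, lam ^ 2 * ∑ i, (A p2 i * x i) ^ 2 := by
        have : ∑ i, (∑ p2, (A p2 i) ^ 2) * x i ^ 2 = ∑ p2, ∑ i, (A p2 i * x i) ^ 2 := by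
          simp only [Finset.sum_mul, mul_pow]
          rw [Finset.sum_comm]
        rw [this, Finset.mul_sum]
    _ ≤ ∑ p2, ∑ p1, (A.mulVec (fun i => A p2 i * x i) p1) ^ 2 :=
        Finset.sum_le_sum fun p2 _ => h _
    _ = _ := hrw.symm

theorem stmt_16 (d r : ℕ) (A : Matrix (Fin d) (Fin r) ℝ) (hσ : 0 < sval A r) :
    (sval A r) ^ 2 ≤ sval (Matrix.of fun (p : Fin d × Fin d) i => A p.1 i * A p.2 i) r ∧
      ∀ b : Fin d × Fin d → ℝ, ∃! ξ : Fin r → ℝ, ∀ ξ' : Fin r → ℝ,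
        ∑ p, ((Matrix.of fun (p : Fin d × Fin d) i => A p.1 i * A p.2 i).mulVec ξ p - b p) ^ 2
          ≤ ∑ p, ((Matrix.of fun (p : Fin d × Fin d) i => A p.1 i * A p.2 i).mulVec ξ' p - b p) ^ 2 := by
  classical
  set B : Matrix (Fin d × Fin d) (Fin r) ℝ :=
    Matrix.of fun (p : Fin d × Fin d) i => A p.1 i * A p.2 i with hB
  rcases Nat.eq_zero_or_pos r with hr | hr
  · exfalso
    subst hr
    have hz : sval A 0 = 0 := by
      apply Real.sSup_of_not_bddAbove
      rintro ⟨u, hu⟩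
      have hmem : max u 0 + 1 ∈ {c : ℝ | 0 ≤ c ∧ ∃ V : Submodule ℝ (EuclideanSpace ℝ (Fin 0)),
          0 ≤ Module.finrank ℝ V ∧
          ∀ x : EuclideanSpace ℝ (Fin 0), x ∈ V →
            c * ‖x‖ ≤ ‖(EuclideanSpace.equiv (Fin d) ℝ).symm
              (A.mulVec ((EuclideanSpace.equiv (Fin 0) ℝ) x))‖} := by
        refine ⟨by positivity, ⊤, Nat.zero_le _, fun x _ => ?_⟩
        have hx : x = 0 := Subsingleton.elim _ _
        rw [hx]
        simpa using norm_nonneg _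
      have := hu hmem
      have : u < max u 0 + 1 := lt_of_le_of_lt (le_max_left u 0) (by linarith)
      linarith [hu hmem]
    rw [hz] at hσ
    exact lt_irrefl _ hσ
  -- r ≥ 1
  set L := sval A r with hL
  have hL0 : 0 ≤ L := hσ.le
  -- the defining inequality for L
  have hA : ∀ x : Fin r → ℝ, L ^ 2 * ∑ i, x i ^ 2 ≤ ∑ p, (A.mulVec x p) ^ 2 := by
    intro x
    refine (sq_char hL0 x (A.mulVec x)).mp ?_
    set s := Real.sqrt (∑ i, x i ^ 2) with hs
    set t := Real.sqrt (∑ p, (A.mulVec x p) ^ 2) with ht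
    have hs0 : 0 ≤ s := Real.sqrt_nonneg _
    have ht0 : 0 ≤ t := Real.sqrt_nonneg _
    have hb : ∀ c ∈ {c : ℝ | 0 ≤ c ∧ ∃ V : Submodule ℝ (EuclideanSpace ℝ (Fin r)),
        r ≤ Module.finrank ℝ V ∧
        ∀ x : EuclideanSpace ℝ (Fin r), x ∈ V →
          c * ‖x‖ ≤ ‖(EuclideanSpace.equiv (Fin d) ℝ).symm
            (A.mulVec ((EuclideanSpace.equiv (Fin r) ℝ) x))‖}, c * s ≤ t := by
      intro c hc
      obtain ⟨hc0, h'⟩ := (mem_sval_set_iff r A c).mp hc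
      exact (sq_char hc0 x (A.mulVec x)).mpr (h' x)
    rcases eq_or_lt_of_le hs0 with hseq | hspos
    · rw [← hseq, mul_zero]; exact ht0
    · have hle : L ≤ t / s := by
        apply Real.sSup_le _ (div_nonneg ht0 hs0)
        intro c hc
        exact (le_div_iff₀ hspos).mpr (hb c hc)
      exact (le_div_iff₀ hspos).mp hle
  have hBbound : ∀ x : Fin r → ℝ, (L ^ 2) ^ 2 * ∑ i, x i ^ 2 ≤ ∑ p, (B.mulVec x p) ^ 2 :=
    fun x => key_quad A L hA x
  constructor
  · -- first part: L^2 ≤ sval B r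
    show L ^ 2 ≤ sSup _
    have hmem := (mem_sval_set_iff r B (L ^ 2)).mpr ⟨sq_nonneg _, hBbound⟩
    refine le_csSup ?_ hmem
    set e : Fin r → ℝ := Pi.single ⟨0, hr⟩ (1:ℝ) with he
    refine ⟨Real.sqrt (∑ p, (B.mulVec e p) ^ 2), fun c hc => ?_⟩
    obtain ⟨hc0, h'⟩ := (mem_sval_set_iff r B c).mp hc
    have h1 := h' e
    have h2 : ∑ j, e j ^ 2 = 1 := by
      simp [he, Pi.single_apply]
    rw [h2, mul_one] at h1
    calc c = Real.sqrt (c ^ 2) := (Real.sqrt_sq hc0).symm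
      _ ≤ _ := Real.sqrt_le_sqrt h1
  · -- least squares
    intro b
    have hL4 : 0 < (L ^ 2) ^ 2 := by positivity
    have hzero : ∀ v : Fin r → ℝ, ∑ p, (B.mulVec v p) ^ 2 ≤ 0 → v = 0 := by
      intro v hv
      have h1 := hBbound v
      have hs0 : (0:ℝ) ≤ ∑ i, v i ^ 2 := Finset.sum_nonneg fun i _ => sq_nonneg _
      have hs : ∑ i, v i ^ 2 = 0 := by nlinarith
      funext i
      have := (Finset.sum_eq_zero_iff_of_nonneg (fun i _ => sq_nonneg (v i))).mp hs i
        (Finset.mem_univ i)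
      exact (pow_eq_zero_iff two_ne_zero).mp this
    -- solve normal equations
    set G := Bᵀ * B with hG
    have hsq : ∀ v : Fin r → ℝ, v ⬝ᵥ G.mulVec v = ∑ p, (B.mulVec v p) ^ 2 := by
      intro v
      rw [hG, ← Matrix.mulVec_mulVec, Matrix.dotProduct_mulVec, Matrix.vecMul_transpose]
      simp [dotProduct, sq]
    have hGinj : Function.Injective G.mulVecLin := by
      rw [← LinearMap.ker_eq_bot, LinearMap.ker_eq_bot']
      intro v hv
      apply hzero
      have : v ⬝ᵥ G.mulVec v = 0 := by
        rw [show G.mulVec v = 0 from hv]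
        simp
      rw [hsq v] at this
      exact this.le
    have hGsurj : Function.Surjective G.mulVecLin :=
      (LinearMap.injective_iff_surjective).mp hGinj
    obtain ⟨ξ₀, hξ₀⟩ := hGsurj (Bᵀ.mulVec b)
    have hnorm : Bᵀ.mulVec (fun p => B.mulVec ξ₀ p - b p) = 0 := by
      have h1 : G.mulVec ξ₀ = Bᵀ.mulVec b := hξ₀
      have h2 : (fun p => B.mulVec ξ₀ p - b p) = B.mulVec ξ₀ - b := rfl
      rw [h2, Matrix.mulVec_sub, Matrix.mulVec_mulVec, ← hG, h1, sub_self]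
    have hnormal : ∀ i, ∑ p, B p i * (B.mulVec ξ₀ p - b p) = 0 := by
      intro i
      have := congrFun hnorm i
      simpa [Matrix.mulVec, dotProduct, Matrix.transpose_apply] using this
    have pyth : ∀ ξ' : Fin r → ℝ,
        ∑ p, (B.mulVec ξ' p - b p) ^ 2 =
          ∑ p, (B.mulVec (fun i => ξ' i - ξ₀ i) p) ^ 2 + ∑ p, (B.mulVec ξ₀ p - b p) ^ 2 := by
      intro ξ'
      set v : Fin r → ℝ := fun i => ξ' i - ξ₀ i with hv
      have hdec : ∀ p, B.mulVec ξ' p - b p = B.mulVec v p + (B.mulVec ξ₀ p - b p) := by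
        intro p
        simp only [Matrix.mulVec, dotProduct, hv, mul_sub, Finset.sum_sub_distrib]
        ring
      have cross : ∑ p, B.mulVec v p * (B.mulVec ξ₀ p - b p) = 0 := by
        have : ∀ p, B.mulVec v p * (B.mulVec ξ₀ p - b p)
            = ∑ i, v i * (B p i * (B.mulVec ξ₀ p - b p)) := by
          intro p
          simp only [Matrix.mulVec, dotProduct, Finset.sum_mul]
          exact Finset.sum_congr rfl fun i _ => by ring
        rw [Finset.sum_congr rfl fun p _ => this p, Finset.sum_comm]
        refine Finset.sum_eq_zero fun i _ => ?_
        rw [← Finset.mul_sum, hnormal i, mul_zero]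
      calc ∑ p, (B.mulVec ξ' p - b p) ^ 2
          = ∑ p, ((B.mulVec v p) ^ 2 + 2 * (B.mulVec v p * (B.mulVec ξ₀ p - b p))
              + (B.mulVec ξ₀ p - b p) ^ 2) := by
            refine Finset.sum_congr rfl fun p _ => ?_
            rw [hdec p]; ring
        _ = ∑ p, (B.mulVec v p) ^ 2 + 2 * ∑ p, B.mulVec v p * (B.mulVec ξ₀ p - b p)
              + ∑ p, (B.mulVec ξ₀ p - b p) ^ 2 := by
            rw [Finset.sum_add_distrib, Finset.sum_add_distrib, Finset.mul_sum]
        _ = _ := by rw [cross]; ring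
    refine ⟨ξ₀, fun ξ' => ?_, fun ξ₁ h₁ => ?_⟩
    · rw [pyth ξ']
      exact le_add_of_nonneg_left (Finset.sum_nonneg fun p _ => sq_nonneg _)
    · have h2 := h₁ ξ₀
      rw [pyth ξ₁] at h2
      have h3 : ∑ p, (B.mulVec (fun i => ξ₁ i - ξ₀ i) p) ^ 2 ≤ 0 := by linarith
      have h4 := hzero _ h3
      funext i
      have := congrFun h4 i
      simpa [sub_eq_zero] using this
end
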